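/- Let H, S : ℝ³ → ℝ be differentiable, let P : ℝ³ → M₃(ℝ) assign to each point a skew-symmetric matrix, and let x : ℝ → ℝ³ be a differentiable curve satisfying the metriplectic equation x'(t) = P(x(t))∇H(x(t)) + g(∇H(x(t)))∇S(x(t)) for all t. Then H(x(t)) is constant in t; i.e., the Hamiltonian H is conserved along every solution of the metriplectic system. -/

import Mathlib

open Matrix RealInnerProductSpace

noncomputable def gmat (a : EuclideanSpace ℝ (Fin 3)) : Matrix (Fin 3) (Fin 3) ℝ :=
  Matrix.vecMulVec a a - (‖a‖ ^ 2) • 1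

noncomputable def grad (f : EuclideanSpace ℝ (Fin 3) → ℝ) (x : EuclideanSpace ℝ (Fin 3)) :
    EuclideanSpace ℝ (Fin 3) := gradient f x

lemma inner_eq_dot (a v : EuclideanSpace ℝ (Fin 3)) :
    ⟪a, v⟫ = dotProduct (a : Fin 3 → ℝ) v := by
  simp [PiLp.inner_apply, dotProduct, mul_comm]

lemma dot_skew (M : Matrix (Fin 3) (Fin 3) ℝ) (h : Mᵀ = -M) (a : Fin 3 → ℝ) :
    dotProduct a (M *ᵥ a) = 0 := by
  have h1 : dotProduct a (M *ᵥ a) = dotProduct (Mᵀ *ᵥ a) a := by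
    rw [dotProduct_mulVec, ← vecMul_transpose, transpose_transpose]
  have h2 : dotProduct (Mᵀ *ᵥ a) a = -(dotProduct a (M *ᵥ a)) := by
    rw [h, neg_mulVec, neg_dotProduct, dotProduct_comm]
  linarith [h1.trans h2]

lemma dot_gmat (a v : EuclideanSpace ℝ (Fin 3)) :
    dotProduct (a : Fin 3 → ℝ) (gmat a *ᵥ v) = 0 := by
  have hn : (‖a‖ : ℝ) ^ 2 = dotProduct (a : Fin 3 → ℝ) a := by
    rw [← real_inner_self_eq_norm_sq, inner_eq_dot]
  have hmv : (gmat a) *ᵥ (v : Fin 3 → ℝ)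
      = dotProduct (a : Fin 3 → ℝ) v • (a : Fin 3 → ℝ)
        - (‖a‖ ^ 2) • (v : Fin 3 → ℝ) := by
    funext i
    simp only [gmat, Matrix.mulVec, dotProduct, Matrix.sub_apply, Matrix.smul_apply,
      Matrix.one_apply, vecMulVec_apply, PiLp.sub_apply, PiLp.smul_apply, smul_eq_mul,
      mul_ite, mul_one, mul_zero, ite_mul, zero_mul, sub_mul, Finset.sum_sub_distrib,
      Finset.sum_ite_eq', Finset.mem_univ, if_true, Finset.mul_sum]
    congr 1
    · rw [Pi.smul_apply, smul_eq_mul, Finset.sum_mul]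
      exact Finset.sum_congr rfl fun j _ => by ring
    · simp [Finset.sum_ite_eq]
  rw [hmv, dotProduct_sub, dotProduct_smul, dotProduct_smul, hn]
  ring_nf

theorem hamiltonian_conserved (H S : EuclideanSpace ℝ (Fin 3) → ℝ)
    (hH : Differentiable ℝ H) (hS : Differentiable ℝ S)
    (P : EuclideanSpace ℝ (Fin 3) → Matrix (Fin 3) (Fin 3) ℝ)
    (hskew : ∀ m, (P m)ᵀ = -(P m))
    (x : ℝ → EuclideanSpace ℝ (Fin 3))
    (hx : ∀ t, HasDerivAt x
      (WithLp.toLp 2 (P (x t) *ᵥ grad H (x t) + gmat (grad H (x t)) *ᵥ grad S (x t))) t) :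
    ∀ t s : ℝ, H (x t) = H (x s) := by
  have key : ∀ t, HasDerivAt (fun t => H (x t)) 0 t := by
    intro t
    set a := grad H (x t) with ha
    set w : EuclideanSpace ℝ (Fin 3) := WithLp.toLp 2 (P (x t) *ᵥ a + gmat a *ᵥ grad S (x t)) with hw
    have hgrad : HasGradientAt H a (x t) := (hH (x t)).hasGradientAt
    have hc : HasDerivAt (fun t => H (x t)) ⟪a, w⟫ t :=
      (hgrad.hasFDerivAt.comp_hasDerivAt t (hx t))
    have hz : ⟪a, w⟫ = 0 := by
      rw [inner_eq_dot]
      have : dotProduct (a : Fin 3 → ℝ) ((P (x t) *ᵥ a : Fin 3 → ℝ) + (gmat a *ᵥ grad S (x t) : Fin 3 → ℝ)) = 0 := by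
        rw [dotProduct_add, dot_skew _ (hskew (x t)), dot_gmat, add_zero]
      exact this
    rwa [hz] at hc
  intro t s
  have := is_const_of_deriv_eq_zero (f := fun t => H (x t))
    (fun t => (key t).differentiableAt) (fun t => (key t).deriv) t s
  exact this
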